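/- Let U ⊆ ℝ^{n_pot} be open, M ∈ ℝ^{n_kin×n_kin} symmetric, V : U → ℝ continuously differentiable, c : U → ℝ^k continuously differentiable, and let Z : U → ℝ^{n_pot×n_kin}, A : U → ℝ^{ℓ×n_kin}, B : U → ℝ^{n_kin×m}, τ_d : U × ℝ^{n_kin} → ℝ^{n_kin}, G : ℝ^{n_kin} → ℝ^{n_kin×n_kin} be functions with G(Γ) skew-symmetric for every Γ. Let I ⊆ ℝ be an open interval and let ζ : I → U, ϖ : I → ℝ^{n_kin} be differentiable and λ : I → ℝ^k, μ : I → ℝ^ℓ, τ_ext : I → ℝ^m, ϖ_ext : I → ℝ^m be functions such that for all t ∈ I: ζ̇(t) = Z(ζ(t)) ϖ(t); M ϖ̇(t) = −Z(ζ(t))ᵀ ∇V(ζ(t)) − Z(ζ(t))ᵀ c'(ζ(t))ᵀ λ(t) − τ_d(ζ(t),ϖ(t)) − G(M ϖ(t)) ϖ(t) − A(ζ(t))ᵀ μ(t) − B(ζ(t)) τ_ext(t); c(ζ(t)) = 0; A(ζ(t)) ϖ(t) = 0; and ϖ_ext(t) = B(ζ(t))ᵀ ϖ(t). Then for all t ∈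 I the function H(t) := ½ ϖ(t)ᵀ M ϖ(t) + V(ζ(t)) is differentiable with Ḣ(t) = −ϖ(t)ᵀ τ_d(ζ(t),ϖ(t)) − ϖ_ext(t)ᵀ τ_ext(t). -/

import Mathlib

open Matrix

/-- The gradient of `V : ℝ^n → ℝ`, given componentwise by the partial derivatives. -/
noncomputable def grad {n : ℕ} (V : (Fin n → ℝ) → ℝ) (x : Fin n → ℝ) : Fin n → ℝ :=
  fun i => fderiv ℝ V x (Pi.single i 1)

/-- The Jacobian matrix of `c : ℝ^n → ℝ^k`. -/
noncomputable def jac {n k : ℕ} (c : (Fin n → ℝ) → (Fin k → ℝ)) (x : Fin n → ℝ) :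
    Matrix (Fin k) (Fin n) ℝ :=
  Matrix.of fun j i => fderiv ℝ c x (Pi.single i 1) j

lemma pi_eq_sum_single {n : ℕ} (v : Fin n → ℝ) :
    v = ∑ i, v i • (Pi.single i 1 : Fin n → ℝ) := by
  funext j; simp [Finset.sum_apply, Pi.single_apply]

lemma fderiv_eq_grad_dot {n : ℕ} (V : (Fin n → ℝ) → ℝ) (x v : Fin n → ℝ) :
    fderiv ℝ V x v = grad V x ⬝ᵥ v := by
  conv_lhs => rw [pi_eq_sum_single v]
  simp [grad, dotProduct, mul_comm]

lemma fderiv_eq_jac_mulVec {n k : ℕ} (c : (Fin n → ℝ) → (Fin k → ℝ)) (x v : Fin n → ℝ) :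
    fderiv ℝ c x v = jac c x *ᵥ v := by
  conv_lhs => rw [pi_eq_sum_single v]
  funext j
  simp [jac, mulVec, dotProduct, map_sum, Finset.sum_apply, mul_comm]

lemma dot_sym {n : ℕ} (M : Matrix (Fin n) (Fin n) ℝ) (hM : Mᵀ = M) (v w : Fin n → ℝ) :
    v ⬝ᵥ M *ᵥ w = w ⬝ᵥ M *ᵥ v := by
  rw [Matrix.dotProduct_mulVec]
  conv_lhs => rw [← hM]
  rw [Matrix.vecMul_transpose, dotProduct_comm]

lemma dot_skew {n : ℕ} (G : Matrix (Fin n) (Fin n) ℝ) (hG : Gᵀ = -G) (v : Fin n → ℝ) :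
    v ⬝ᵥ G *ᵥ v = 0 := by
  have h := Matrix.dotProduct_mulVec v G v
  rw [show v ᵥ* G = Gᵀ *ᵥ v by rw [Matrix.mulVec_transpose], hG] at h
  simp [Matrix.neg_mulVec, dotProduct_comm v] at h
  rw [dotProduct_comm]; linarith

lemma dot_transpose_mulVec {a b : ℕ} (N : Matrix (Fin a) (Fin b) ℝ) (v : Fin b → ℝ)
    (x : Fin a → ℝ) : v ⬝ᵥ Nᵀ *ᵥ x = (N *ᵥ v) ⬝ᵥ x := by
  rw [Matrix.dotProduct_mulVec, Matrix.vecMul_transpose]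

/-- Energy balance for a multibody system in redundant coordinates: along any solution of
`ζ̇ = Z(ζ)ϖ`,
`M ϖ̇ = −Z(ζ)ᵀ∇V(ζ) − Z(ζ)ᵀc'(ζ)ᵀλ − τ_d(ζ,ϖ) − G(Mϖ)ϖ − A(ζ)ᵀμ − B(ζ)τ_ext`,
`c(ζ) = 0`, `A(ζ)ϖ = 0`, `ϖ_ext = B(ζ)ᵀϖ`,
the total energy `H = ½ ϖᵀMϖ + V(ζ)` satisfies
`Ḣ = −ϖᵀ τ_d(ζ,ϖ) − ϖ_extᵀ τ_ext`. -/
theorem energy_balance_redundant {npot nkin k ℓ m : ℕ}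
    (U : Set (Fin npot → ℝ)) (hU : IsOpen U)
    (M : Matrix (Fin nkin) (Fin nkin) ℝ) (hM : Mᵀ = M)
    (V : (Fin npot → ℝ) → ℝ) (hV : ContDiffOn ℝ 1 V U)
    (c : (Fin npot → ℝ) → (Fin k → ℝ)) (hc : ContDiffOn ℝ 1 c U)
    (Z : (Fin npot → ℝ) → Matrix (Fin npot) (Fin nkin) ℝ)
    (A : (Fin npot → ℝ) → Matrix (Fin ℓ) (Fin nkin) ℝ)
    (B : (Fin npot → ℝ) → Matrix (Fin nkin) (Fin m) ℝ)
    (tauD : (Fin npot → ℝ) → (Fin nkin → ℝ) → (Fin nkin → ℝ))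
    (G : (Fin nkin → ℝ) → Matrix (Fin nkin) (Fin nkin) ℝ)
    (hG : ∀ Γ : Fin nkin → ℝ, (G Γ)ᵀ = -(G Γ))
    (I : Set ℝ) (hI : IsOpen I) (hIint : I.OrdConnected)
    (ζ : ℝ → (Fin npot → ℝ)) (ϖ ϖdot : ℝ → (Fin nkin → ℝ))
    (lam : ℝ → (Fin k → ℝ)) (mu : ℝ → (Fin ℓ → ℝ))
    (tauExt ϖExt : ℝ → (Fin m → ℝ))
    (hζU : ∀ t ∈ I, ζ t ∈ U)
    (hζ : ∀ t ∈ I, HasDerivAt ζ (Z (ζ t) *ᵥ ϖ t) t)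
    (hϖ : ∀ t ∈ I, HasDerivAt ϖ (ϖdot t) t)
    (hforce : ∀ t ∈ I,
      M *ᵥ ϖdot t =
        -((Z (ζ t))ᵀ *ᵥ grad V (ζ t)) - (Z (ζ t))ᵀ *ᵥ ((jac c (ζ t))ᵀ *ᵥ lam t)
          - tauD (ζ t) (ϖ t) - G (M *ᵥ ϖ t) *ᵥ ϖ t
          - (A (ζ t))ᵀ *ᵥ mu t - B (ζ t) *ᵥ tauExt t)
    (hpos : ∀ t ∈ I, c (ζ t) = 0)
    (hvel : ∀ t ∈ I, A (ζ t) *ᵥ ϖ t = 0)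
    (hext : ∀ t ∈ I, ϖExt t = (B (ζ t))ᵀ *ᵥ ϖ t) :
    ∀ t ∈ I,
      HasDerivAt (fun s => (1 / 2 : ℝ) * (ϖ s ⬝ᵥ M *ᵥ ϖ s) + V (ζ s))
        (-(ϖ t ⬝ᵥ tauD (ζ t) (ϖ t)) - ϖExt t ⬝ᵥ tauExt t) t := by
  intro t ht
  have hζt := hζ t ht
  have hϖt := hϖ t ht
  have hUmem : U ∈ nhds (ζ t) := hU.mem_nhds (hζU t ht)
  -- derivative of the kinetic term
  have hcomp : ∀ i : Fin nkin, HasDerivAt (fun s => ϖ s i) (ϖdot t i) t := fun i =>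
    ((ContinuousLinearMap.proj i : (Fin nkin → ℝ) →L[ℝ] ℝ).hasFDerivAt.comp_hasDerivAt t hϖt)
  have hQ : HasDerivAt (fun s => ϖ s ⬝ᵥ M *ᵥ ϖ s)
      (ϖdot t ⬝ᵥ M *ᵥ ϖ t + ϖ t ⬝ᵥ M *ᵥ ϖdot t) t := by
    have h : ∀ i : Fin nkin, HasDerivAt (fun s => ϖ s i * (M *ᵥ ϖ s) i)
        (ϖdot t i * (M *ᵥ ϖ t) i + ϖ t i * (M *ᵥ ϖdot t) i) t := by
      intro i
      have h2 : HasDerivAt (fun s => (M *ᵥ ϖ s) i) ((M *ᵥ ϖdot t) i) t := by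
        simp only [mulVec, dotProduct]
        exact HasDerivAt.fun_sum fun j _ => (hcomp j).const_mul (M i j)
      exact (hcomp i).mul h2
    have := HasDerivAt.fun_sum (fun i (_ : i ∈ Finset.univ) => h i)
    simpa [dotProduct, Finset.sum_add_distrib] using this
  -- derivative of the potential term
  have hVd : DifferentiableAt ℝ V (ζ t) :=
    ((hV.differentiableOn one_ne_zero).differentiableAt hUmem)
  have hVc : HasDerivAt (fun s => V (ζ s)) (grad V (ζ t) ⬝ᵥ (Z (ζ t) *ᵥ ϖ t)) t := by
    have := hVd.hasFDerivAt.comp_hasDerivAt t hζt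
    rwa [fderiv_eq_grad_dot] at this
  -- differentiating the position constraint
  have hcz : jac c (ζ t) *ᵥ (Z (ζ t) *ᵥ ϖ t) = 0 := by
    have hcd : DifferentiableAt ℝ c (ζ t) :=
      ((hc.differentiableOn one_ne_zero).differentiableAt hUmem)
    have h1 : HasDerivAt (fun s => c (ζ s)) (jac c (ζ t) *ᵥ (Z (ζ t) *ᵥ ϖ t)) t := by
      have := hcd.hasFDerivAt.comp_hasDerivAt t hζt
      rwa [fderiv_eq_jac_mulVec] at this
    have heq : (fun s => c (ζ s)) =ᶠ[nhds t] fun _ => (0 : Fin k → ℝ) :=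
      Filter.eventuallyEq_of_mem (hI.mem_nhds ht) fun s hs => hpos s hs
    have h2 : HasDerivAt (fun s => c (ζ s)) 0 t :=
      (hasDerivAt_const t (0 : Fin k → ℝ)).congr_of_eventuallyEq heq
    exact h1.unique h2
  -- power balance
  have key : ϖ t ⬝ᵥ M *ᵥ ϖdot t
      = -(ϖ t ⬝ᵥ tauD (ζ t) (ϖ t)) - ϖExt t ⬝ᵥ tauExt t
        - grad V (ζ t) ⬝ᵥ (Z (ζ t) *ᵥ ϖ t) := by
    rw [hforce t ht]
    simp only [dotProduct_sub, dotProduct_neg]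
    rw [dot_transpose_mulVec (Z (ζ t)) (ϖ t) (grad V (ζ t)),
        dot_transpose_mulVec (Z (ζ t)) (ϖ t) ((jac c (ζ t))ᵀ *ᵥ lam t),
        dot_transpose_mulVec (jac c (ζ t)) (Z (ζ t) *ᵥ ϖ t) (lam t), hcz,
        dot_skew _ (hG (M *ᵥ ϖ t)) (ϖ t),
        dot_transpose_mulVec (A (ζ t)) (ϖ t) (mu t), hvel t ht,
        show B (ζ t) = ((B (ζ t))ᵀ)ᵀ from (Matrix.transpose_transpose _).symm,
        dot_transpose_mulVec ((B (ζ t))ᵀ) (ϖ t) (tauExt t), ← hext t ht,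
        dotProduct_comm (Z (ζ t) *ᵥ ϖ t)]
    simp [zero_dotProduct]
    ring
  have hH := (hQ.const_mul (1 / 2 : ℝ)).add hVc
  refine HasDerivAt.congr_deriv hH ?_
  rw [dot_sym M hM (ϖdot t) (ϖ t), key]
  ring
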